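/- arXiv:1906.04339 — 4 statements merged into one kernel-verified Lean document; each statement's English description precedes it below -/
import Mathlib

section
/- For every integer n ≥ 3, the characteristic polynomial of the Laplacian matrix of G_n over ℝ factors as char(L(G_n)) = (X − 6)^n · ∏_{i=0}^{n−1} (X − 8·sin²(iπ/n)). In particular the Laplacian eigenvalues of G_n are 0, 8·sin²(iπ/n) for i = 1, …, n−1, and 6 with multiplicity n. -/
open Polynomial

/-- The graph `G_n = P₂ ⊠ C_n`: vertex set `(ZMod n) × Fin 2`, where two distinct vertices
`(i,a)` and `(j,b)` are adjacent iff `i = j` or `i = j + 1` or `j = i + 1` in `ZMod n`. -/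
def Gn (n : ℕ) : SimpleGraph (ZMod n × Fin 2) where
  Adj x y := x ≠ y ∧ (x.1 = y.1 ∨ x.1 = y.1 + 1 ∨ y.1 = x.1 + 1)
  symm := by
    constructor
    rintro x y ⟨hne, h | h | h⟩
    · exact ⟨hne.symm, Or.inl h.symm⟩
    · exact ⟨hne.symm, Or.inr (Or.inr h)⟩
    · exact ⟨hne.symm, Or.inr (Or.inl h)⟩
  loopless := by constructor; rintro x ⟨hne, -⟩; exact hne rfl

instance (n : ℕ) : DecidableRel (Gn n).Adj :=
  fun _ _ => inferInstanceAs (Decidable (_ ∧ _))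

open Matrix Kronecker

noncomputable def ww (n : ℕ) : ℂ := Complex.exp (2 * Real.pi * Complex.I / n)
noncomputable def Fm (n : ℕ) : Matrix (ZMod n) (ZMod n) ℂ :=
  Matrix.of fun i k => ww n ^ (i.val * k.val)
noncomputable def Tm (n : ℕ) [NeZero n] : Matrix (ZMod n) (ZMod n) ℂ :=
  Matrix.of fun i j => (if i = j then 1 else 0) + (if j = i - 1 then 1 else 0)
    + (if j = i + 1 then (1:ℂ) else 0)
def Jm : Matrix (Fin 2) (Fin 2) ℂ := Matrix.of fun _ _ => 1
def Hm : Matrix (Fin 2) (Fin 2) ℂ := !![1, 1; 1, -1]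

section basics
variable (n : ℕ) [NeZero n]

lemma ww_ne_zero : ww n ≠ 0 := Complex.exp_ne_zero _

lemma ww_pow_n : ww n ^ n = 1 := by
  rw [ww, ← Complex.exp_nat_mul, mul_div_cancel₀ _ (Nat.cast_ne_zero.mpr (NeZero.ne n))]
  exact Complex.exp_two_pi_mul_I

lemma ww_pow_mod (a : ℕ) : ww n ^ a = ww n ^ (a % n) := by
  conv_lhs => rw [← Nat.div_add_mod a n]
  rw [pow_add, pow_mul, ww_pow_n, one_pow, one_mul]

lemma ww_pow_congr {a b : ℕ} (h : a ≡ b [MOD n]) : ww n ^ a = ww n ^ b := by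
  rw [ww_pow_mod n a, ww_pow_mod n b, h]

lemma Fm_shift (hn : 1 < n) (i k : ZMod n) :
    Fm n (i + 1) k = Fm n i k * ww n ^ k.val := by
  have h1 : (1 : ZMod n).val = 1 := by haveI : Fact (1 < n) := ⟨hn⟩; exact ZMod.val_one n
  have hc : (i + 1).val * k.val ≡ (i.val + 1) * k.val [MOD n] := by
    refine Nat.ModEq.mul_right _ ?_
    rw [ZMod.val_add, h1]
    exact Nat.mod_modEq _ n
  show ww n ^ ((i+1).val * k.val) = ww n ^ (i.val * k.val) * ww n ^ k.val
  rw [ww_pow_congr n hc, add_mul, one_mul, pow_add]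

noncomputable def zEquiv : ZMod n ≃ Fin n where
  toFun i := ⟨i.val, ZMod.val_lt i⟩
  invFun j := (j : ℕ)
  left_inv i := by simp [ZMod.natCast_val, ZMod.cast_id]
  right_inv j := by ext; simp [ZMod.val_cast_of_lt j.isLt]

lemma det_Fm_ne_zero : (Fm n).det ≠ 0 := by
  have : (Fm n).det = (Matrix.vandermonde fun j : Fin n => ww n ^ (j : ℕ)).det := by
    rw [← Matrix.det_reindex_self (zEquiv n) (Fm n)]
    congr 1
    ext j l
    simp [Fm, Matrix.vandermonde, zEquiv, ZMod.val_cast_of_lt j.isLt,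
      ZMod.val_cast_of_lt l.isLt, pow_mul]
  rw [this, Matrix.det_vandermonde]
  have hprim : IsPrimitiveRoot (ww n) n := by
    have := Complex.isPrimitiveRoot_exp n (NeZero.ne n)
    exact this
  refine Finset.prod_ne_zero_iff.mpr fun i _ => Finset.prod_ne_zero_iff.mpr fun j hj => ?_
  rw [Finset.mem_Ioi] at hj
  refine sub_ne_zero.mpr fun hEq => ?_
  exact absurd (hprim.pow_inj j.isLt i.isLt hEq) (Nat.ne_of_gt hj)

lemma charpoly_eq_prod_of_mul_eq {m : Type*} [Fintype m] [DecidableEq m]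
    (M V : Matrix m m ℂ) (d : m → ℂ) (h : M * V = V * Matrix.diagonal d)
    (hV : V.det ≠ 0) : M.charpoly = ∏ i, (X - C (d i)) := by
  have key : M.charmatrix * V.map C = V.map C * (Matrix.diagonal d).charmatrix := by
    unfold Matrix.charmatrix
    rw [sub_mul, mul_sub]
    congr 1
    · exact (Matrix.scalar_commute X (fun r => Commute.all _ _) (V.map C)).eq
    · show (C.mapMatrix M) * (C.mapMatrix V) = (C.mapMatrix V) * C.mapMatrix (diagonal d)
      rw [← _root_.map_mul, ← _root_.map_mul, h]
  have hdet := congrArg Matrix.det key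
  rw [Matrix.det_mul, Matrix.det_mul] at hdet
  have hVC : (V.map C).det = C V.det := (RingHom.map_det C V).symm
  rw [hVC, mul_comm (C V.det)] at hdet
  have h2 : M.charpoly = (Matrix.diagonal d).charmatrix.det :=
    mul_right_cancel₀ (by simpa using hV) hdet
  rw [h2]
  have : (Matrix.diagonal d).charmatrix = Matrix.diagonal (fun i => X - C (d i)) := by
    ext i j
    by_cases hij : i = j
    · subst hij; simp
    · simp [Matrix.charmatrix_apply_ne _ _ _ hij, Matrix.diagonal_apply_ne _ hij,
        Matrix.diagonal_apply_ne d hij]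
  rw [this, Matrix.det_diagonal]

end basics

section main
variable (n : ℕ) [NeZero n] (hn : 3 ≤ n)
include hn

lemma zmod_one_ne_zero : (1 : ZMod n) ≠ 0 := by
  have : (1 : ZMod n).val = 1 := by
    haveI : Fact (1 < n) := ⟨by omega⟩; exact ZMod.val_one n
  intro h; rw [h, ZMod.val_zero] at this; omega

lemma zmod_two_ne_zero : (2 : ZMod n) ≠ 0 := by
  intro h
  have h2 : ((2 : ℕ) : ZMod n).val = 2 := ZMod.val_cast_of_lt (by omega)
  have h3 : ((2 : ℕ) : ZMod n) = 0 := by push_cast; exact h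
  rw [h3, ZMod.val_zero] at h2; omega

lemma adj_decomp : (Gn n).adjMatrix ℂ = Tm n ⊗ₖ Jm - 1 := by
  have h1 := zmod_one_ne_zero n hn
  have h2 := zmod_two_ne_zero n hn
  ext ⟨i, a⟩ ⟨j, b⟩
  simp only [SimpleGraph.adjMatrix_apply, Gn, kroneckerMap_apply, Matrix.sub_apply, one_apply, Tm, Jm,
    Matrix.of_apply, mul_one]
  have e1 : i = j + 1 ↔ j = i - 1 := by constructor <;> rintro rfl <;> ring
  by_cases p1 : i = j
  · subst p1
    have q2 : ¬ (i : ZMod n) = i - 1 := fun h => h1 (by linear_combination h)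
    have q3 : ¬ (i : ZMod n) = i + 1 := fun h => h1 (by linear_combination -h)
    by_cases pab : a = b
    · subst pab
      simp [q2, q3, SimpleGraph.Adj, SimpleGraph.adjMatrix, Matrix.of_apply]
    · simp [q2, q3, SimpleGraph.Adj, pab, Prod.ext_iff]
  · have hne : ¬ ((i, a) = (j, b)) := by simp [Prod.ext_iff, p1]
    have q2 : ¬ i = i - 1 := fun h => h1 (by linear_combination h)
    have q4 : ¬ (i - 1 : ZMod n) = i + 1 := fun h => h2 (by linear_combination -h)
    have q5 : ¬ (i + 1 : ZMod n) = i - 1 := fun h => h2 (by linear_combination h)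
    by_cases p2 : j = i - 1
    · have p3 : ¬ j = i + 1 := by
        intro p3; rw [p3] at p2; exact h2 (by linear_combination p2)
      simp [SimpleGraph.Adj, p1, p2, p3, e1, hne, Prod.ext_iff, h1, h2, q2, q4, q5]
    · by_cases p3 : j = i + 1
      · simp [SimpleGraph.Adj, p1, p2, p3, e1, hne, Prod.ext_iff, h1, h2, q2, q4, q5]
      · simp [SimpleGraph.Adj, p1, p2, p3, e1, hne, Prod.ext_iff, h1, h2, q2, q4, q5]
end main

section main2
variable (n : ℕ) [NeZero n] (hn : 3 ≤ n)

lemma Tm_row_sum (i : ZMod n) : ∑ j, Tm n i j = 3 := by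
  simp only [Tm, Matrix.of_apply, Finset.sum_add_distrib]
  rw [Finset.sum_ite_eq Finset.univ i (fun _ => (1:ℂ)),
    Finset.sum_ite_eq' Finset.univ (i - 1) (fun _ => (1:ℂ)),
    Finset.sum_ite_eq' Finset.univ (i + 1) (fun _ => (1:ℂ))]
  norm_num

include hn

lemma deg_eq (v : ZMod n × Fin 2) : ((Gn n).degree v : ℂ) = 5 := by
  have h : ((Gn n).adjMatrix ℂ *ᵥ Function.const _ 1) v = (Gn n).degree v * 1 :=
    SimpleGraph.adjMatrix_mulVec_const_apply
  rw [mul_one] at h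
  rw [← h, adj_decomp n hn, sub_mulVec, Matrix.one_mulVec]
  obtain ⟨i, a⟩ := v
  have : ((Tm n ⊗ₖ Jm) *ᵥ Function.const _ 1) (i, a) = 6 := by
    simp only [Matrix.mulVec, dotProduct, Function.const_apply, mul_one,
      kroneckerMap_apply, Jm, Matrix.of_apply]
    rw [Fintype.sum_prod_type]
    simp only [mul_one, Finset.sum_const, Finset.card_univ, Fintype.card_fin, nsmul_eq_mul,
      Nat.cast_ofNat]
    rw [← Finset.mul_sum, Tm_row_sum]
    norm_num
  rw [Pi.sub_apply, this]
  norm_num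

end main2

noncomputable def cF (n : ℕ) (k : ZMod n) : ℂ := 1 + ww n ^ k.val + (ww n ^ k.val)⁻¹
noncomputable def dvec (n : ℕ) : ZMod n × Fin 2 → ℂ :=
  fun p => 6 - cF n p.1 * (if p.2 = 0 then 2 else 0)

section main3
variable (n : ℕ) [NeZero n] (hn : 3 ≤ n)
include hn

lemma lap_decomp : (Gn n).lapMatrix ℂ
    = (6:ℂ) • (1 : Matrix (ZMod n × Fin 2) (ZMod n × Fin 2) ℂ) - Tm n ⊗ₖ Jm := by
  have hA := adj_decomp n hn
  ext v w
  rw [SimpleGraph.lapMatrix, Matrix.sub_apply, hA]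
  by_cases hvw : v = w
  · subst hvw
    simp only [SimpleGraph.degMatrix, Matrix.sub_apply, Matrix.smul_apply, Matrix.one_apply_eq,
      smul_eq_mul, Matrix.diagonal_apply_eq]
    rw [deg_eq n hn v]
    ring
  · simp only [SimpleGraph.degMatrix, Matrix.sub_apply, Matrix.smul_apply,
      Matrix.one_apply_ne hvw, smul_eq_mul, Matrix.diagonal_apply_ne _ hvw]
    ring

lemma TF : Tm n * Fm n = Fm n * Matrix.diagonal (cF n) := by
  ext i k
  rw [Matrix.mul_apply, Matrix.mul_diagonal]
  simp only [Tm, Matrix.of_apply, add_mul, Finset.sum_add_distrib, ite_mul, one_mul, zero_mul]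
  rw [Finset.sum_ite_eq Finset.univ i (fun j => Fm n j k),
    Finset.sum_ite_eq' Finset.univ (i - 1) (fun j => Fm n j k),
    Finset.sum_ite_eq' Finset.univ (i + 1) (fun j => Fm n j k)]
  simp only [Finset.mem_univ, if_pos]
  have hζ : ww n ^ k.val ≠ 0 := pow_ne_zero _ (ww_ne_zero n)
  have hs : Fm n (i + 1) k = Fm n i k * ww n ^ k.val := Fm_shift n (by omega) i k
  have hs2 : Fm n i k = Fm n (i - 1) k * ww n ^ k.val := by
    have := Fm_shift n (by omega) (i - 1) k
    rwa [sub_add_cancel] at this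
  have hs2' : Fm n (i - 1) k = Fm n i k * (ww n ^ k.val)⁻¹ := by
    field_simp [hs2]
    exact hs2.symm
  rw [hs, hs2', cF]
  field_simp
  ring

omit hn

lemma JH : Jm * Hm = Hm * Matrix.diagonal (fun s : Fin 2 => if s = 0 then (2:ℂ) else 0) := by
  ext a b
  fin_cases a <;> fin_cases b <;>
    simp [Jm, Hm, Matrix.mul_apply, Fin.sum_univ_two, Matrix.mul_diagonal] <;> norm_num

lemma detV_ne_zero : (Fm n ⊗ₖ Hm).det ≠ 0 := by
  rw [Matrix.det_kronecker]
  have hH : Hm.det = -2 := by simp [Hm, Matrix.det_fin_two_of]; norm_num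
  rw [hH]
  exact mul_ne_zero (pow_ne_zero _ (det_Fm_ne_zero n)) (pow_ne_zero _ (by norm_num))

include hn

lemma LV : (Gn n).lapMatrix ℂ * (Fm n ⊗ₖ Hm)
    = (Fm n ⊗ₖ Hm) * Matrix.diagonal (dvec n) := by
  rw [lap_decomp n hn, sub_mul, smul_mul_assoc, one_mul, ← Matrix.mul_kronecker_mul,
    TF n hn, JH, Matrix.mul_kronecker_mul, Matrix.diagonal_kronecker_diagonal]
  have hd : Matrix.diagonal (dvec n)
      = (6:ℂ) • (1 : Matrix (ZMod n × Fin 2) (ZMod n × Fin 2) ℂ)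
        - Matrix.diagonal (fun p : ZMod n × Fin 2 => cF n p.1 * (if p.2 = 0 then (2:ℂ) else 0)) := by
    ext p q
    by_cases hpq : p = q
    · subst hpq
      simp [dvec, Matrix.diagonal_apply_eq]
    · simp [Matrix.diagonal_apply_ne _ hpq, Matrix.one_apply_ne hpq]
  rw [hd, mul_sub, Matrix.mul_smul, mul_one]

lemma charpolyC : ((Gn n).lapMatrix ℂ).charpoly
    = ∏ p : ZMod n × Fin 2, (X - C (dvec n p)) :=
  charpoly_eq_prod_of_mul_eq _ _ _ (LV n hn) (detV_ne_zero n)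

lemma dvec_eval (i : ℕ) (hi : i < n) :
    dvec n ((i : ZMod n), 0) = ((8 * Real.sin (i * Real.pi / n) ^ 2 : ℝ) : ℂ) := by
  simp only [dvec, cF, if_pos rfl]
  rw [ZMod.val_cast_of_lt hi]
  set θ : ℝ := 2 * Real.pi * i / n with hθ
  have hωi : ww n ^ i = Complex.exp ((θ : ℂ) * Complex.I) := by
    rw [ww, ← Complex.exp_nat_mul]
    congr 1
    rw [hθ]
    push_cast
    ring
  have hinv : (ww n ^ i)⁻¹ = Complex.exp ((-θ : ℝ) * Complex.I) := by
    rw [hωi, ← Complex.exp_neg]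
    congr 1
    push_cast
    ring
  rw [hinv, hωi, Complex.exp_mul_I, Complex.exp_mul_I]
  simp only [ite_true]
  rw [← Complex.ofReal_cos, ← Complex.ofReal_sin, ← Complex.ofReal_cos, ← Complex.ofReal_sin]
  rw [Real.cos_neg, Real.sin_neg]
  have hr : 8 * Real.sin (i * Real.pi / n) ^ 2 = 4 - 4 * Real.cos θ := by
    have h2 : θ = 2 * (i * Real.pi / n) := by rw [hθ]; ring
    rw [h2, Real.cos_two_mul]
    nlinarith [Real.sin_sq_add_cos_sq (i * Real.pi / n)]
  rw [hr]
  push_cast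
  ring

lemma lap_map : ((Gn n).lapMatrix ℝ).map Complex.ofRealHom = (Gn n).lapMatrix ℂ := by
  ext v w
  simp only [SimpleGraph.lapMatrix, SimpleGraph.degMatrix, SimpleGraph.adjMatrix,
    Matrix.map_apply, Matrix.sub_apply, Matrix.of_apply, Complex.ofRealHom_eq_coe]
  by_cases hvw : v = w
  · subst hvw
    simp only [Matrix.diagonal_apply_eq]
    split_ifs <;> push_cast <;> ring
  · simp only [Matrix.diagonal_apply_ne _ hvw]
    split_ifs <;> push_cast <;> ring

end main3


/-- For every integer `n ≥ 3`, the characteristic polynomial of the Laplacian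
matrix of `G_n` over `ℝ` factors as
`char(L(G_n)) = (X − 6)^n · ∏_{i=0}^{n−1} (X − 8·sin²(iπ/n))`. -/
theorem charpoly_lapMatrix_Gn (n : ℕ) [NeZero n] (hn : 3 ≤ n) :
    ((Gn n).lapMatrix ℝ).charpoly =
      (X - C (6 : ℝ)) ^ n *
        ∏ i ∈ Finset.range n, (X - C (8 * Real.sin (i * Real.pi / n) ^ 2)) := by
  apply Polynomial.map_injective (Complex.ofRealHom) Complex.ofReal_injective
  rw [← Matrix.charpoly_map, lap_map n hn, charpolyC n hn]
  rw [Polynomial.map_mul, Polynomial.map_pow, Polynomial.map_sub, Polynomial.map_X,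
    Polynomial.map_C, Polynomial.map_prod]
  simp only [Polynomial.map_sub, Polynomial.map_X, Polynomial.map_C,
    Complex.ofRealHom_eq_coe]
  rw [Fintype.prod_prod_type]
  have hinner : ∀ k : ZMod n, (∏ s : Fin 2, (X - C (dvec n (k, s))))
      = (X - C (dvec n (k, 0))) * (X - C (6 : ℂ)) := by
    intro k
    rw [Fin.prod_univ_two]
    congr 2
    simp [dvec]
  simp only [hinner]
  rw [Finset.prod_mul_distrib, Finset.prod_const, Finset.card_univ, ZMod.card, mul_comm]
  congr 1
  rw [← Equiv.prod_comp (zEquiv n).symm (fun k => X - C (dvec n (k, 0))),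
    ← Fin.prod_univ_eq_prod_range (fun i => X - C ((8 * Real.sin (i * Real.pi / n) ^ 2 : ℝ) : ℂ)) n]
  refine Finset.prod_congr rfl fun j _ => ?_
  have : (zEquiv n).symm j = ((j : ℕ) : ZMod n) := rfl
  rw [this, dvec_eval n hn j j.isLt]
end

section
/- For every odd integer n ≥ 3, the Wiener index of G_n equals (n³ + n)/2. -/
/-- The Wiener index of a finite graph: the sum of the graph distances over all unordered
pairs of vertices, i.e. half the sum of `d(u,v)` over all ordered pairs `(u,v)`. -/
noncomputable def wienerIndex {V : Type*} [Fintype V] (G : SimpleGraph V) : ℕ :=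
  (∑ u : V, ∑ v : V, G.dist u v) / 2

/-- cycle distance -/
def cyc (n : ℕ) (t : ZMod n) : ℕ := min t.val (n - t.val)

section cycfacts
variable (n : ℕ) [NeZero n]

lemma cyc_zero : cyc n 0 = 0 := by simp [cyc, ZMod.val_zero]

lemma cyc_ne_zero {t : ZMod n} (h : t ≠ 0) : cyc n t ≠ 0 := by
  have h1 : t.val ≠ 0 := fun hv => h (by rwa [← ZMod.val_eq_zero])
  have h2 : t.val < n := ZMod.val_lt t
  simp only [cyc]; omega

lemma val_one' (hn : 3 ≤ n) : (1 : ZMod n).val = 1 := by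
  have : Fact (1 < n) := ⟨by omega⟩
  exact ZMod.val_one n

lemma cyc_add_one_le (hn : 3 ≤ n) (t : ZMod n) : cyc n (t + 1) ≤ cyc n t + 1 := by
  have hv : t.val < n := ZMod.val_lt t
  have h1 : (t + 1).val = (t.val + 1) % n := by
    rw [ZMod.val_add, val_one' n hn]
  simp only [cyc]
  rcases eq_or_ne (t.val + 1) n with h | h
  · rw [h1, h, Nat.mod_self]; omega
  · rw [h1, Nat.mod_eq_of_lt (by omega)]; omega

lemma cyc_neg (t : ZMod n) : cyc n (-t) = cyc n t := by
  rcases eq_or_ne t 0 with rfl | h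
  · simp
  · have hv : t.val < n := ZMod.val_lt t
    have := ZMod.neg_val t
    rw [if_neg h] at this
    simp only [cyc, this]; omega

lemma cyc_sub_one_le (hn : 3 ≤ n) (t : ZMod n) : cyc n (t - 1) ≤ cyc n t + 1 := by
  have := cyc_add_one_le n hn (-t)
  rw [cyc_neg] at this
  calc cyc n (t - 1) = cyc n (-(t-1)) := (cyc_neg n _).symm
    _ = cyc n (-t + 1) := by ring_nf
    _ ≤ cyc n t + 1 := this

/-- lower bound: any walk is at least cyc long -/
lemma cyc_le_walk_length (hn : 3 ≤ n) {x y : ZMod n × Fin 2} (w : (Gn n).Walk x y) :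
    cyc n (x.1 - y.1) ≤ w.length := by
  induction w with
  | nil => simp [cyc_zero]
  | @cons u v z h p ih =>
    rw [SimpleGraph.Walk.length_cons]
    obtain ⟨-, h | h | h⟩ := h
    · rw [h]; omega
    · have : u.1 - z.1 = (v.1 - z.1) + 1 := by rw [h]; ring
      rw [this]
      have := cyc_add_one_le n hn (v.1 - z.1)
      omega
    · have : u.1 - z.1 = (v.1 - z.1) - 1 := by rw [h]; ring
      rw [this]
      have := cyc_sub_one_le n hn (v.1 - z.1)
      omega

lemma adj_of_first (hn : 3 ≤ n) (i : ZMod n) (a b : Fin 2) (s : ZMod n)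
    (hs : s = 1 ∨ s = -1) : (Gn n).Adj (i, a) (i + s, b) := by
  have h1 : (1 : ZMod n) ≠ 0 := by
    intro h
    have := val_one' n hn
    rw [h] at this; simp at this
  have hne : i ≠ i + s := by
    intro h
    rcases hs with rfl | rfl
    · exact h1 (by linear_combination -h)
    · exact h1 (by linear_combination h)
  refine ⟨by simp [Prod.ext_iff, hne], ?_⟩
  rcases hs with rfl | rfl
  · right; right; rfl
  · right; left; linear_combination (i : ZMod n) - i

lemma cyc_decrement (hn : 3 ≤ n) (t : ZMod n) (d : ℕ) (h : cyc n t = d + 2) :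
    cyc n (t - 1) = d + 1 ∨ cyc n (t + 1) = d + 1 := by
  have hv : t.val < n := ZMod.val_lt t
  have hmin : min t.val (n - t.val) = d + 2 := h
  rcases le_or_gt (2 * t.val) n with hle | hlt
  · -- cyc t = t.val, use t - 1
    left
    have hval : (t - 1).val = t.val - 1 := by
      have : t - 1 = t + (-1) := by ring
      have h10 : (1 : ZMod n) ≠ 0 := by
        intro h; have := val_one' n hn; rw [h] at this; simp at this
      have hv1 : (-1 : ZMod n).val = n - 1 := by
        rw [show (-1 : ZMod n) = -(1:ZMod n) by ring, ZMod.neg_val, if_neg h10, val_one' n hn]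
      rw [this, ZMod.val_add, hv1, show t.val + (n-1) = (t.val - 1) + n by omega,
        Nat.add_mod_right, Nat.mod_eq_of_lt (by omega)]
    simp only [cyc, hval]; omega
  · right
    have hval : (t + 1).val = t.val + 1 := by
      rw [ZMod.val_add, val_one' n hn, Nat.mod_eq_of_lt] <;> omega
    simp only [cyc, hval]; omega

lemma exists_walk (hn : 3 ≤ n) : ∀ (d : ℕ) (t : ZMod n), cyc n t = d + 1 →
    ∀ (i : ZMod n) (a b : Fin 2), ∃ w : (Gn n).Walk (i, a) (i + t, b), w.length = d + 1 := by
  intro d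
  induction d with
  | zero =>
    intro t ht i a b
    have hs : t = 1 ∨ t = -1 := by
      have hv : t.val < n := ZMod.val_lt t
      have : t.val = 1 ∨ t.val = n - 1 := by simp only [cyc] at ht; omega
      rcases this with h | h
      · left
        have := ZMod.natCast_val (R := ZMod n) t
        rw [h] at this; simpa [ZMod.cast_id] using this.symm
      · right
        have := ZMod.natCast_val (R := ZMod n) t
        rw [h] at this
        rw [ZMod.cast_id] at this
        rw [← this]
        push_cast [Nat.cast_sub (by omega : 1 ≤ n)]
        simp
    exact ⟨SimpleGraph.Walk.cons (adj_of_first n hn i a b t hs) SimpleGraph.Walk.nil, rfl⟩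
  | succ d ih =>
    intro t ht i a b
    rcases cyc_decrement n hn t d ht with h | h
    · obtain ⟨w, hw⟩ := ih (t - 1) h (i + 1) a b
      have heq : i + 1 + (t - 1) = i + t := by ring
      refine ⟨SimpleGraph.Walk.cons (adj_of_first n hn i a a 1 (Or.inl rfl))
        (w.copy rfl (by rw [heq])), ?_⟩
      simp [hw]
    · obtain ⟨w, hw⟩ := ih (t + 1) h (i + -1) a b
      have heq : i + -1 + (t + 1) = i + t := by ring
      refine ⟨SimpleGraph.Walk.cons (adj_of_first n hn i a a (-1) (Or.inr rfl))
        (w.copy rfl (by rw [heq])), ?_⟩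
      simp [hw]

lemma dist_eq (hn : 3 ≤ n) (x y : ZMod n × Fin 2) :
    (Gn n).dist x y = if x = y then 0 else max 1 (cyc n (x.1 - y.1)) := by
  rcases eq_or_ne x y with rfl | hne
  · simp [SimpleGraph.dist_self]
  rw [if_neg hne]
  -- upper bound walk
  obtain ⟨w, hw⟩ : ∃ w : (Gn n).Walk x y, w.length = max 1 (cyc n (x.1 - y.1)) := by
    rcases eq_or_ne x.1 y.1 with h1 | h1
    · -- same first coordinate, different second
      have : x.1 - y.1 = 0 := by rw [h1]; ring
      rw [this, cyc_zero]
      have hadj : (Gn n).Adj x y := ⟨hne, Or.inl h1⟩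
      exact ⟨SimpleGraph.Walk.cons hadj SimpleGraph.Walk.nil, rfl⟩
    · have ht0 : y.1 - x.1 ≠ 0 := fun h => h1 (by linear_combination -h)
      have := cyc_ne_zero n ht0
      obtain ⟨d, hd⟩ : ∃ d, cyc n (y.1 - x.1) = d + 1 :=
        ⟨cyc n (y.1 - x.1) - 1, by omega⟩
      obtain ⟨w, hwl⟩ := exists_walk n hn d (y.1 - x.1) hd x.1 x.2 y.2
      have heq : (x.1 + (y.1 - x.1), y.2) = y := by
        rw [show x.1 + (y.1 - x.1) = y.1 by ring]
      have hcyc : cyc n (x.1 - y.1) = d + 1 := by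
        rw [show x.1 - y.1 = -(y.1 - x.1) by ring, cyc_neg, hd]
      refine ⟨(w.copy (by simp) heq), ?_⟩
      simp [hwl, hcyc]
  have hub : (Gn n).dist x y ≤ max 1 (cyc n (x.1 - y.1)) := hw ▸ SimpleGraph.dist_le w
  have hr : (Gn n).Reachable x y := ⟨w⟩
  obtain ⟨p, hp⟩ := hr.exists_walk_length_eq_dist
  have hlb1 : 1 ≤ (Gn n).dist x y := hr.pos_dist_of_ne hne
  have hlb2 : cyc n (x.1 - y.1) ≤ (Gn n).dist x y := hp ▸ cyc_le_walk_length n hn p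
  omega

end cycfacts

lemma sum_min (m : ℕ) : ∑ k ∈ Finset.range (2 * m + 1), min k (2 * m + 1 - k) = m * (m + 1) := by
  induction m with
  | zero => simp
  | succ m ih =>
    have h1 : 2 * (m + 1) + 1 = (2 * m + 2) + 1 := by ring
    rw [h1, Finset.sum_range_succ, Finset.sum_range_succ']
    have h2 : ∀ k ∈ Finset.range (2 * m + 1),
        min (k + 1) (2 * m + 2 + 1 - (k + 1)) = min k (2 * m + 1 - k) + 1 := by
      intro k hk
      rw [Finset.mem_range] at hk
      omega
    rw [Finset.sum_congr rfl h2, Finset.sum_add_distrib, ih]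
    simp only [Finset.sum_const, Finset.card_range, smul_eq_mul, mul_one]
    ring_nf
    omega

lemma sum_cyc (n : ℕ) [NeZero n] :
    ∑ t : ZMod n, cyc n t = ∑ k ∈ Finset.range n, min k (n - k) := by
  refine Finset.sum_nbij' (fun t => t.val) (fun k => (k : ZMod n)) ?_ ?_ ?_ ?_ ?_
  · intro t _; simp [Finset.mem_range, ZMod.val_lt]
  · intro k _; simp
  · intro t _; exact (ZMod.natCast_val t).trans (ZMod.cast_id n t)
  · intro k hk; exact ZMod.val_cast_of_lt (Finset.mem_range.mp hk)
  · intro t _; rfl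


/-- For every odd integer `n ≥ 3`, the Wiener index of `G_n = P₂ ⊠ C_n`
equals `(n³ + n)/2`. -/
theorem wienerIndex_Gn_odd (n : ℕ) [NeZero n] (hn : 3 ≤ n) (hodd : Odd n) :
    wienerIndex (Gn n) = (n ^ 3 + n) / 2 := by
  obtain ⟨m, hm⟩ := hodd
  have hcycsum : ∑ t : ZMod n, cyc n t = m * (m + 1) := by
    rw [sum_cyc, show n = 2 * m + 1 by omega, sum_min]
  have hstep : ∀ i : ZMod n, ∀ a : Fin 2, ∑ v : ZMod n × Fin 2, (Gn n).dist (i, a) v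
      = 1 + 2 * (m * (m + 1)) := by
    intro i a
    have h1 : ∑ v : ZMod n × Fin 2, (Gn n).dist (i, a) v
        = ∑ j : ZMod n, ((if i = j then 1 else 0) + 2 * cyc n (i - j)) := by
      rw [Fintype.sum_prod_type]
      refine Finset.sum_congr rfl fun j _ => ?_
      have hd : ∀ b : Fin 2, (Gn n).dist (i,a) (j,b)
          = if (i,a)=(j,b) then 0 else max 1 (cyc n (i-j)) := fun b => dist_eq n hn _ _
      rw [Fin.sum_univ_two, hd 0, hd 1]
      rcases eq_or_ne i j with rfl | hij
      · simp only [Prod.mk.injEq, true_and, cyc_zero, sub_self]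
        fin_cases a <;> simp
      · have hc := cyc_ne_zero n (show i - j ≠ 0 from sub_ne_zero.mpr hij)
        simp only [Prod.mk.injEq, hij, false_and, if_false, if_neg hij]
        omega
    have h2 : ∑ j : ZMod n, cyc n (i - j) = m * (m + 1) := by
      rw [← hcycsum]
      exact (Fintype.sum_equiv (Equiv.subLeft i) _ _ (fun t => by simp)).symm
    rw [h1, Finset.sum_add_distrib, Finset.sum_ite_eq, if_pos (Finset.mem_univ i),
      ← Finset.mul_sum, h2]
  have key : ∑ u : ZMod n × Fin 2, ∑ v : ZMod n × Fin 2, (Gn n).dist u v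
      = n * (2 * (1 + 2 * (m * (m + 1)))) := by
    rw [Fintype.sum_prod_type]
    have : ∀ i : ZMod n, ∑ a : Fin 2, ∑ v : ZMod n × Fin 2, (Gn n).dist (i, a) v
        = 2 * (1 + 2 * (m * (m + 1))) := by
      intro i
      rw [Fin.sum_univ_two, hstep i 0, hstep i 1]
      ring
    rw [Finset.sum_congr rfl (fun i _ => this i), Finset.sum_const, Finset.card_univ,
      ZMod.card, smul_eq_mul]
  rw [wienerIndex, key]
  have hn2 : n = 2 * m + 1 := by omega
  subst hn2
  have h3 : (2*m+1) * (2 * (1 + 2*(m*(m+1)))) = 2 * ((2*m+1) * (1 + 2*(m*(m+1)))) := by ring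
  have h4 : (2*m+1)^3 + (2*m+1) = 2 * ((2*m+1) * (1 + 2*(m*(m+1)))) := by ring
  rw [h3, h4]
end

section
/- For every even integer n ≥ 4, the Wiener index of G_n equals (n³ + 2n)/2. -/
/-- cyclic distance from 0 to x in ZMod n -/
def cd (n : ℕ) (x : ZMod n) : ℕ := min x.val (n - x.val)

lemma cd_zero (n : ℕ) [NeZero n] : cd n 0 = 0 := by
  simp [cd]

lemma cd_add_one (n : ℕ) (h : 2 ≤ n) (x : ZMod n) : cd n (x + 1) ≤ cd n x + 1 := by
  haveI : NeZero n := ⟨by omega⟩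
  haveI : Fact (1 < n) := ⟨by omega⟩
  have h1 : (x + 1).val = (x.val + 1) % n := by rw [ZMod.val_add, ZMod.val_one]
  have hx := ZMod.val_lt x
  by_cases hc : x.val + 1 < n
  · rw [Nat.mod_eq_of_lt hc] at h1
    unfold cd; omega
  · have : x.val + 1 = n := by omega
    rw [this, Nat.mod_self] at h1
    unfold cd; omega

lemma cd_neg (n : ℕ) [NeZero n] (x : ZMod n) : cd n (-x) = cd n x := by
  by_cases hx : x = 0
  · simp [hx]
  · haveI : NeZero x := ⟨hx⟩
    have h1 : (-x).val = n - x.val := ZMod.val_neg_of_ne_zero x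
    have hx0 : x.val ≠ 0 := by simpa [ZMod.val_eq_zero] using hx
    have hx1 := ZMod.val_lt x
    unfold cd; omega

lemma cd_sub_one (n : ℕ) (h : 2 ≤ n) (x : ZMod n) : cd n (x - 1) ≤ cd n x + 1 := by
  haveI : NeZero n := ⟨by omega⟩
  have := cd_add_one n h (-x)
  rw [cd_neg] at this
  calc cd n (x - 1) = cd n (-(x-1)) := (cd_neg n _).symm
    _ = cd n (-x + 1) := by ring_nf
    _ ≤ cd n x + 1 := this

lemma cd_le_walk {n : ℕ} [NeZero n] (h : 2 ≤ n) {u v : ZMod n × Fin 2}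
    (w : (Gn n).Walk u v) : cd n (v.1 - u.1) ≤ w.length := by
  induction w with
  | nil => simp [cd_zero]
  | @cons a b c hab p ih =>
    rw [SimpleGraph.Walk.length_cons]
    obtain ⟨-, h1 | h1 | h1⟩ := hab
    · have : c.1 - a.1 = c.1 - b.1 := by rw [h1]
      rw [this]; omega
    · have he : c.1 - a.1 = (c.1 - b.1) - 1 := by rw [h1]; ring
      rw [he]
      calc cd n (c.1 - b.1 - 1) ≤ cd n (c.1 - b.1) + 1 := cd_sub_one n h _
        _ ≤ p.length + 1 := by omega
    · have he : c.1 - a.1 = (c.1 - b.1) + 1 := by rw [h1]; ring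
      rw [he]
      calc cd n (c.1 - b.1 + 1) ≤ cd n (c.1 - b.1) + 1 := cd_add_one n h _
        _ ≤ p.length + 1 := by omega

lemma adj_step {n : ℕ} (h : 2 ≤ n) (i : ZMod n) (a b : Fin 2) :
    (Gn n).Adj (i, a) (i + 1, b) := by
  haveI : Fact (1 < n) := ⟨by omega⟩
  constructor
  · intro hc
    have : i = i + 1 := congrArg Prod.fst hc
    have : (1 : ZMod n) = 0 := by linear_combination -this
    exact one_ne_zero this
  · exact Or.inr (Or.inr rfl)

lemma walk_exists {n : ℕ} (h : 2 ≤ n) :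
    ∀ (k : ℕ), 1 ≤ k → ∀ (i : ZMod n) (a b : Fin 2),
    ∃ w : (Gn n).Walk (i, a) (i + (k : ZMod n), b), w.length = k := by
  intro k
  induction k with
  | zero => omega
  | succ k ih =>
    intro _ i a b
    by_cases hk : 1 ≤ k
    · obtain ⟨w, hw⟩ := ih hk (i + 1) a b
      have he : (i + 1 + (k : ZMod n), b) = (i + ((k+1 : ℕ) : ZMod n), b) := by
        push_cast; rw [Prod.mk.injEq]; constructor; ring; rfl
      refine ⟨(SimpleGraph.Walk.cons (adj_step h i a a) w).copy rfl he, ?_⟩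
      simp [hw]
    · have hk0 : k = 0 := by omega
      subst hk0
      have he : (i + 1, b) = (i + ((0+1 : ℕ) : ZMod n), b) := by push_cast; simp
      exact ⟨(SimpleGraph.Walk.cons (adj_step h i a b) SimpleGraph.Walk.nil).copy rfl he, by simp⟩

lemma dist_eq_s7 {n : ℕ} [NeZero n] (h : 2 ≤ n) (u v : ZMod n × Fin 2) :
    (Gn n).dist u v =
      if u.1 = v.1 then (if u.2 = v.2 then 0 else 1) else cd n (v.1 - u.1) := by
  obtain ⟨i, a⟩ := u
  obtain ⟨j, b⟩ := v
  simp only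
  by_cases h1 : i = j
  · subst h1
    by_cases h2 : a = b
    · subst h2; simp [SimpleGraph.dist_self]
    · simp only [if_pos rfl, if_neg h2]
      have hadj : (Gn n).Adj (i, a) (i, b) := by
        refine ⟨?_, Or.inl rfl⟩
        simp [Prod.ext_iff, h2]
      exact (SimpleGraph.dist_eq_one_iff_adj).mpr hadj
  · rw [if_neg h1]
    set d := j - i with hd
    have hdne : d ≠ 0 := by
      intro hc; apply h1; linear_combination -hc
    have hv0 : d.val ≠ 0 := by simpa [ZMod.val_eq_zero] using hdne
    have hvlt := ZMod.val_lt d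
    have hc1 : 1 ≤ cd n d := by unfold cd; omega
    -- upper bound
    have hub : (Gn n).dist (i, a) (j, b) ≤ cd n d := by
      rcases le_or_gt d.val (n - d.val) with hle | hlt
      · have hcd : cd n d = d.val := by unfold cd; omega
        obtain ⟨w, hw⟩ := walk_exists h d.val (by omega) i a b
        have hj : i + ((d.val : ℕ) : ZMod n) = j := by
          rw [ZMod.natCast_rightInverse d]; rw [hd]; ring
        rw [hcd]
        calc (Gn n).dist (i, a) (j, b) = (Gn n).dist (i, a) (i + (d.val : ZMod n), b) := by
              rw [hj]
          _ ≤ w.length := SimpleGraph.dist_le w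
          _ = d.val := hw
      · have hcd : cd n d = n - d.val := by unfold cd; omega
        obtain ⟨w, hw⟩ := walk_exists h (n - d.val) (by omega) j b a
        have hj : j + (((n - d.val : ℕ)) : ZMod n) = i := by
          push_cast [Nat.cast_sub hvlt.le]
          rw [ZMod.natCast_self, ZMod.natCast_rightInverse d, hd]; ring
        rw [hcd, SimpleGraph.dist_comm]
        calc (Gn n).dist (j, b) (i, a)
            = (Gn n).dist (j, b) (j + ((n - d.val : ℕ) : ZMod n), a) := by rw [hj]
          _ ≤ w.length := SimpleGraph.dist_le w
          _ = n - d.val := hw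
    -- lower bound
    have hreach : (Gn n).Reachable (i, a) (j, b) := by
      rcases le_or_gt d.val (n - d.val) with hle | hlt
      · obtain ⟨w, -⟩ := walk_exists h d.val (by omega) i a b
        have hj : i + ((d.val : ℕ) : ZMod n) = j := by
          rw [ZMod.natCast_rightInverse d]; rw [hd]; ring
        rw [← hj]; exact ⟨w⟩
      · obtain ⟨w, -⟩ := walk_exists h (n - d.val) (by omega) j b a
        have hj : j + (((n - d.val : ℕ)) : ZMod n) = i := by
          push_cast [Nat.cast_sub hvlt.le]
          rw [ZMod.natCast_self, ZMod.natCast_rightInverse d, hd]; ring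
        rw [← hj]; exact ⟨w.reverse⟩
    obtain ⟨p, hp⟩ := hreach.exists_walk_length_eq_dist
    have hlb := cd_le_walk h p
    simp only [← hd] at hlb
    omega

lemma sum_min_range (m : ℕ) (hm : 1 ≤ m) :
    ∑ t ∈ Finset.range (2 * m), min t (2 * m - t) = m * m := by
  have hsplit : ∑ t ∈ Finset.range (2 * m), min t (2 * m - t)
      = ∑ t ∈ Finset.range m, min t (2 * m - t)
        + ∑ t ∈ Finset.Ico m (2 * m), min t (2 * m - t) := by
    rw [Finset.range_eq_Ico, ← Finset.sum_Ico_consecutive _ (Nat.zero_le m) (by omega),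
      ← Finset.range_eq_Ico]
  have h1 : ∑ t ∈ Finset.range m, min t (2 * m - t) = ∑ t ∈ Finset.range m, t := by
    apply Finset.sum_congr rfl
    intro t ht
    rw [Finset.mem_range] at ht
    omega
  have h2 : ∑ t ∈ Finset.Ico m (2 * m), min t (2 * m - t)
      = ∑ j ∈ Finset.range m, (m - j) := by
    rw [Finset.sum_Ico_eq_sum_range]
    have : 2 * m - m = m := by omega
    rw [this]
    apply Finset.sum_congr rfl
    intro j hj
    rw [Finset.mem_range] at hj
    omega
  have h3 : ∑ j ∈ Finset.range m, (m - j) = ∑ j ∈ Finset.range m, (j + 1) := by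
    rw [← Finset.sum_range_reflect]
    apply Finset.sum_congr rfl
    intro j hj
    rw [Finset.mem_range] at hj
    omega
  have h4 : (∑ j ∈ Finset.range m, j) * 2 = m * (m - 1) := Finset.sum_range_id_mul_two m
  have h5 : ∑ j ∈ Finset.range m, (j + 1) = (∑ j ∈ Finset.range m, j) + m := by
    rw [Finset.sum_add_distrib]; simp
  have h6 : m * (m - 1) + m = m * m := by
    obtain ⟨k, rfl⟩ : ∃ k, m = k + 1 := ⟨m - 1, by omega⟩
    simp only [Nat.add_sub_cancel]
    ring
  rw [hsplit, h1, h2, h3, h5]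
  linarith [h4, h6]

lemma sum_cd (n : ℕ) [NeZero n] :
    ∑ k : ZMod n, cd n k = ∑ t ∈ Finset.range n, min t (n - t) := by
  apply Finset.sum_nbij' (i := fun k => ZMod.val k) (j := fun t => (t : ZMod n))
  · intro k _; exact Finset.mem_range.mpr (ZMod.val_lt k)
  · intro t _; exact Finset.mem_univ _
  · intro k _; exact ZMod.natCast_rightInverse k
  · intro t ht; exact ZMod.val_cast_of_lt (Finset.mem_range.mp ht)
  · intro k _; rfl

/-- For every even integer `n ≥ 4`, the Wiener index of `G_n = P₂ ⊠ C_n`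
equals `(n³ + 2n)/2`. -/
theorem wienerIndex_Gn_even (n : ℕ) [NeZero n] (hn : 4 ≤ n) (heven : Even n) :
    wienerIndex (Gn n) = (n ^ 3 + 2 * n) / 2 := by
  obtain ⟨m, hm⟩ := heven
  have h2 : 2 ≤ n := by omega
  have hm2 : 1 ≤ m := by omega
  have hn2m : n = 2 * m := by omega
  have key : (∑ u : ZMod n × Fin 2, ∑ v : ZMod n × Fin 2, (Gn n).dist u v)
      = 2 * n + 4 * (n * (m * m)) := by
    have e0 : (∑ u : ZMod n × Fin 2, ∑ v : ZMod n × Fin 2, (Gn n).dist u v)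
        = ∑ i : ZMod n, ∑ j : ZMod n, ∑ a : Fin 2, ∑ b : Fin 2,
            (Gn n).dist (i, a) (j, b) := by
      rw [Fintype.sum_prod_type]
      refine Finset.sum_congr rfl fun i _ => ?_
      have h1 : ∀ a : Fin 2, (∑ v : ZMod n × Fin 2, (Gn n).dist (i, a) v)
          = ∑ j : ZMod n, ∑ b : Fin 2, (Gn n).dist (i, a) (j, b) :=
        fun a => Fintype.sum_prod_type _
      simp only [h1]
      exact Finset.sum_comm
    have e1 : ∀ (i j : ZMod n), (∑ a : Fin 2, ∑ b : Fin 2, (Gn n).dist (i, a) (j, b))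
        = 4 * cd n (j - i) + (if i = j then 2 else 0) := by
      intro i j
      by_cases hij : i = j
      · subst hij
        simp only [if_pos rfl, sub_self, cd_zero, mul_zero, zero_add]
        simp [dist_eq_s7 h2, Fin.sum_univ_two]
      · simp only [if_neg hij, add_zero]
        have : ∀ a b : Fin 2, (Gn n).dist (i, a) (j, b) = cd n (j - i) := by
          intro a b; rw [dist_eq_s7 h2]; simp [hij]
        simp only [this, Fin.sum_univ_two]
        ring
    have e2 : ∀ i : ZMod n, (∑ j : ZMod n, cd n (j - i)) = ∑ k : ZMod n, cd n k := by
      intro i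
      have := Equiv.sum_comp (Equiv.subRight i) (cd n)
      simpa [Equiv.subRight] using this
    have e3 : (∑ k : ZMod n, cd n k) = m * m := by
      rw [sum_cd, hn2m, sum_min_range m hm2]
    rw [e0]
    simp only [e1]
    rw [Finset.sum_congr rfl (fun i _ => Finset.sum_add_distrib)]
    rw [Finset.sum_add_distrib]
    have e4 : (∑ i : ZMod n, ∑ j : ZMod n, (if i = j then 2 else 0)) = 2 * n := by
      simp [Finset.sum_ite_eq, ZMod.card]
      ring
    have e5 : (∑ i : ZMod n, ∑ j : ZMod n, 4 * cd n (j - i)) = 4 * (n * (m * m)) := by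
      have : ∀ i : ZMod n, (∑ j : ZMod n, 4 * cd n (j - i)) = 4 * (m * m) := by
        intro i
        rw [← Finset.mul_sum, e2, e3]
      simp only [this, Finset.sum_const, Finset.card_univ, ZMod.card, smul_eq_mul]
      ring
    rw [e4, e5]
    ring
  unfold wienerIndex
  rw [key]
  congr 1
  subst hn2m
  ring
end

section
/- Let n ≥ 3 and let S be any set of r vertical edges of G_n, where 0 ≤ r ≤ n. Then the Wiener index of the graph G_n^r obtained from G_n by deleting the edges in S satisfies W(G_n^r) = W(G_n) + r. -/
/-- Deleting a set of edges from `G_n` keeps adjacency decidable (classically). -/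
noncomputable instance (n : ℕ) (s : Set (Sym2 (ZMod n × Fin 2))) :
    DecidableRel ((Gn n).deleteEdges s).Adj :=
  Classical.decRel _

section aux
variable {n : ℕ} [NeZero n]

/-- cyclic distance -/
def cdist (i : ZMod n) : ℕ := min i.val (n - i.val)

lemma cdist_zero : cdist (0 : ZMod n) = 0 := by
  simp [cdist, ZMod.val_zero]

lemma cdist_add_one (hn : 3 ≤ n) (i : ZMod n) : cdist (i + 1) ≤ cdist i + 1 := by
  haveI : Fact (1 < n) := ⟨by omega⟩
  have hv := ZMod.val_lt i
  rw [cdist, cdist, ZMod.val_add, ZMod.val_one]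
  rcases eq_or_lt_of_le (Nat.succ_le_of_lt hv) with h | h
  · have h5 : (i.val + 1) % n = 0 := by
      rw [show i.val + 1 = n by omega, Nat.mod_self]
    rw [h5]; omega
  · rw [Nat.mod_eq_of_lt h]; omega

lemma cdist_neg (i : ZMod n) : cdist (-i) = cdist i := by
  by_cases h : i = 0
  · simp [h]
  · haveI : NeZero i := ⟨h⟩
    have h1 := ZMod.val_neg_of_ne_zero i
    have h2 := ZMod.val_lt i
    have h3 : i.val ≠ 0 := fun hh => h ((ZMod.val_eq_zero _).mp hh)
    simp only [cdist, h1]; omega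

lemma cdist_sub_one (hn : 3 ≤ n) (i : ZMod n) : cdist (i - 1) ≤ cdist i + 1 := by
  have : i - 1 = -(-i + 1) := by ring
  rw [this, cdist_neg]
  calc cdist (-i + 1) ≤ cdist (-i) + 1 := cdist_add_one hn _
    _ = cdist i + 1 := by rw [cdist_neg]

lemma walk_lower (hn : 3 ≤ n) {x y : ZMod n × Fin 2} (w : (Gn n).Walk x y) :
    cdist (x.1 - y.1) ≤ w.length := by
  induction w with
  | nil => simp [cdist_zero]
  | @cons u v z h p ih =>
    rw [SimpleGraph.Walk.length_cons]
    rcases h.2 with h1 | h1 | h1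
    · rw [h1]; omega
    · have : u.1 - z.1 = (v.1 - z.1) + 1 := by rw [h1]; ring
      rw [this]
      have := cdist_add_one hn (v.1 - z.1)
      omega
    · have : u.1 - z.1 = (v.1 - z.1) - 1 := by rw [h1]; ring
      rw [this]
      have := cdist_sub_one hn (v.1 - z.1)
      omega

lemma zmodOneNeZero (hn : 3 ≤ n) : (1 : ZMod n) ≠ 0 := by
  haveI : Fact (1 < n) := ⟨by omega⟩
  intro h
  have := congrArg ZMod.val h
  rw [ZMod.val_one, ZMod.val_zero] at this
  omega

variable (S : Finset (Sym2 (ZMod n × Fin 2)))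

lemma adj' (hS : ∀ e ∈ S, ∃ i : ZMod n, e = s(((i, 0) : ZMod n × Fin 2), (i, 1)))
    (hn : 3 ≤ n) (i : ZMod n) (a b : Fin 2) :
    ((Gn n).deleteEdges ↑S).Adj (i, a) (i + 1, b) := by
  have hne : i ≠ i + 1 := fun h => zmodOneNeZero hn (by
    have : i + 0 = i + 1 := by rw [add_zero]; exact h
    exact ((add_left_cancel this).symm))
  rw [SimpleGraph.deleteEdges_adj]
  refine ⟨⟨fun h => hne (congrArg Prod.fst h), Or.inr (Or.inr rfl)⟩, ?_⟩
  intro hmem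
  obtain ⟨j, hj⟩ := hS _ hmem
  rw [Sym2.eq_iff] at hj
  rcases hj with ⟨h1, h2⟩ | ⟨h1, h2⟩ <;>
  · have e1 := congrArg Prod.fst h1
    have e2 := congrArg Prod.fst h2
    simp only at e1 e2
    exact hne (e1.trans e2.symm)

lemma walkUp (hS : ∀ e ∈ S, ∃ i : ZMod n, e = s(((i, 0) : ZMod n × Fin 2), (i, 1)))
    (hn : 3 ≤ n) : ∀ (k : ℕ), 1 ≤ k → ∀ (i : ZMod n) (a b : Fin 2),
    ∃ w : ((Gn n).deleteEdges ↑S).Walk (i, a) (i + (k : ZMod n), b), w.length = k := by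
  intro k
  induction k with
  | zero => omega
  | succ k ih =>
    intro _ i a b
    rcases Nat.eq_zero_or_pos k with hk | hk
    · subst hk
      refine ⟨(SimpleGraph.Walk.cons (adj' S hS hn i a b) SimpleGraph.Walk.nil).copy rfl ?_, ?_⟩
      · push_cast; ring_nf
      · simp
    · obtain ⟨w, hw⟩ := ih hk (i + 1) a b
      refine ⟨SimpleGraph.Walk.cons (adj' S hS hn i a a) (w.copy rfl ?_), ?_⟩
      · ext <;> push_cast <;> ring_nf
      · simp [hw]

end aux

section dists
variable {n : ℕ} [NeZero n] (S : Finset (Sym2 (ZMod n × Fin 2)))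

lemma dist_le_cdist (hS : ∀ e ∈ S, ∃ i : ZMod n, e = s(((i, 0) : ZMod n × Fin 2), (i, 1)))
    (hn : 3 ≤ n) {H : SimpleGraph (ZMod n × Fin 2)} (hH : (Gn n).deleteEdges ↑S ≤ H)
    (u v : ZMod n × Fin 2) (huv : u.1 ≠ v.1) : H.dist u v ≤ cdist (u.1 - v.1) := by
  have hd : u.1 - v.1 ≠ 0 := sub_ne_zero.mpr huv
  have hd' : v.1 - u.1 ≠ 0 := sub_ne_zero.mpr (Ne.symm huv)
  haveI : NeZero (u.1 - v.1) := ⟨hd⟩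
  have hk1 : 1 ≤ (v.1 - u.1).val := Nat.pos_of_ne_zero (fun h => hd' ((ZMod.val_eq_zero _).mp h))
  have hk2 : 1 ≤ (u.1 - v.1).val := Nat.pos_of_ne_zero (fun h => hd ((ZMod.val_eq_zero _).mp h))
  obtain ⟨w1, hw1⟩ := walkUp S hS hn ((v.1 - u.1).val) hk1 u.1 u.2 v.2
  obtain ⟨w2, hw2⟩ := walkUp S hS hn ((u.1 - v.1).val) hk2 v.1 v.2 u.2
  have e1 : (u.1 + (((v.1 - u.1).val : ℕ) : ZMod n), v.2) = v := by
    rw [ZMod.natCast_zmod_val]; ext <;> simp [add_sub_cancel]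
  have e2 : (v.1 + (((u.1 - v.1).val : ℕ) : ZMod n), u.2) = u := by
    rw [ZMod.natCast_zmod_val]; ext <;> simp [add_sub_cancel]
  have h1 : H.dist u v ≤ (v.1 - u.1).val := by
    have := SimpleGraph.dist_le (((w1.copy Prod.mk.eta e1).mapLe hH))
    simpa [hw1] using this
  have h2 : H.dist u v ≤ (u.1 - v.1).val := by
    have := SimpleGraph.dist_le ((((w2.copy Prod.mk.eta e2).reverse).mapLe hH))
    simpa [hw2] using this
  have hneg : (v.1 - u.1).val = n - (u.1 - v.1).val := by
    have := ZMod.val_neg_of_ne_zero (u.1 - v.1)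
    rwa [neg_sub] at this
  rw [cdist]
  omega

lemma cdist_le_dist (hn : 3 ≤ n) {H : SimpleGraph (ZMod n × Fin 2)} (hH : H ≤ Gn n)
    (u v : ZMod n × Fin 2) (hr : H.Reachable u v) : cdist (u.1 - v.1) ≤ H.dist u v := by
  obtain ⟨p, hp⟩ := hr.exists_walk_length_eq_dist
  rw [← hp]
  have := walk_lower hn (p.mapLe hH)
  simpa using this

lemma dist_eq_cdist (hS : ∀ e ∈ S, ∃ i : ZMod n, e = s(((i, 0) : ZMod n × Fin 2), (i, 1)))
    (hn : 3 ≤ n) {H : SimpleGraph (ZMod n × Fin 2)} (h1 : (Gn n).deleteEdges ↑S ≤ H)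
    (h2 : H ≤ Gn n) (u v : ZMod n × Fin 2) (huv : u.1 ≠ v.1) :
    H.dist u v = cdist (u.1 - v.1) := by
  have hd' : v.1 - u.1 ≠ 0 := sub_ne_zero.mpr (Ne.symm huv)
  have hk1 : 1 ≤ (v.1 - u.1).val := Nat.pos_of_ne_zero (fun h => hd' ((ZMod.val_eq_zero _).mp h))
  obtain ⟨w1, hw1⟩ := walkUp S hS hn ((v.1 - u.1).val) hk1 u.1 u.2 v.2
  have e1 : (u.1 + (((v.1 - u.1).val : ℕ) : ZMod n), v.2) = v := by
    rw [ZMod.natCast_zmod_val]; ext <;> simp [add_sub_cancel]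
  have hr : H.Reachable u v := ((w1.copy Prod.mk.eta e1).mapLe h1).reachable
  exact le_antisymm (dist_le_cdist S hS hn h1 u v huv) (cdist_le_dist hn h2 u v hr)

end dists

def vflip (a : Fin 2) : Fin 2 := if a = 0 then 1 else 0

lemma vflip_ne (a : Fin 2) : vflip a ≠ a := by revert a; decide

lemma eq_vflip_of_ne {a b : Fin 2} (h : a ≠ b) : b = vflip a := by revert a b; decide

lemma fin2_cases {a b : Fin 2} (h : a ≠ b) : (a = 0 ∧ b = 1) ∨ (a = 1 ∧ b = 0) := by
  revert a b; decide

section key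
variable {n : ℕ} [NeZero n] (S : Finset (Sym2 (ZMod n × Fin 2)))

lemma key_dist (hS : ∀ e ∈ S, ∃ i : ZMod n, e = s(((i, 0) : ZMod n × Fin 2), (i, 1)))
    (hn : 3 ≤ n) (u v : ZMod n × Fin 2) :
    ((Gn n).deleteEdges ↑S).dist u v = (Gn n).dist u v +
      (if v = (u.1, vflip u.2) ∧ s(((u.1, 0) : ZMod n × Fin 2), (u.1, 1)) ∈ S then 1 else 0) := by
  obtain ⟨i, a⟩ := u
  obtain ⟨j, b⟩ := v
  by_cases hij : i = j
  · subst hij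
    by_cases hab : a = b
    · subst hab
      rw [if_neg, SimpleGraph.dist_self, SimpleGraph.dist_self]
      rintro ⟨h, -⟩
      exact vflip_ne a (congrArg Prod.snd h).symm
    · have hb : b = vflip a := eq_vflip_of_ne hab
      have hne : ((i, a) : ZMod n × Fin 2) ≠ (i, b) := fun h => hab (congrArg Prod.snd h)
      have hGn : (Gn n).dist (i, a) (i, b) = 1 :=
        SimpleGraph.dist_eq_one_iff_adj.mpr ⟨hne, Or.inl rfl⟩
      have hedge : s(((i, a) : ZMod n × Fin 2), (i, b)) = s((i, 0), (i, 1)) := by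
        rcases fin2_cases hab with ⟨h1, h2⟩ | ⟨h1, h2⟩ <;> subst h1 <;> subst h2
        · rfl
        · exact Sym2.eq_swap
      -- walk of length 2 in the deleted graph
      let w : ((Gn n).deleteEdges ↑S).Walk (i, a) (i, b) :=
        SimpleGraph.Walk.cons (adj' S hS hn i a a)
          (SimpleGraph.Walk.cons ((adj' S hS hn i b a).symm) SimpleGraph.Walk.nil)
      by_cases hmem : s(((i, 0) : ZMod n × Fin 2), (i, 1)) ∈ S
      · rw [if_pos ⟨by rw [hb], hmem⟩, hGn]
        have hup : ((Gn n).deleteEdges ↑S).dist (i, a) (i, b) ≤ 2 := by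
          have := SimpleGraph.dist_le w
          simpa [w] using this
        have h0 : 0 < ((Gn n).deleteEdges ↑S).dist (i, a) (i, b) :=
          w.reachable.pos_dist_of_ne hne
        have h1 : ((Gn n).deleteEdges ↑S).dist (i, a) (i, b) ≠ 1 := by
          intro hd1
          rw [SimpleGraph.dist_eq_one_iff_adj, SimpleGraph.deleteEdges_adj] at hd1
          obtain ⟨-, hns⟩ := hd1
          exact hns (by rw [hedge]; exact hmem)
        omega
      · rw [if_neg (by rintro ⟨-, h⟩; exact hmem h), hGn]
        refine SimpleGraph.dist_eq_one_iff_adj.mpr ?_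
        rw [SimpleGraph.deleteEdges_adj]
        exact ⟨⟨hne, Or.inl rfl⟩, by rw [hedge]; exact fun h => hmem h⟩
  · rw [if_neg (by rintro ⟨h, -⟩; exact hij (congrArg Prod.fst h).symm)]
    rw [dist_eq_cdist S hS hn le_rfl (SimpleGraph.deleteEdges_le _) (i, a) (j, b) hij,
      dist_eq_cdist S hS hn (SimpleGraph.deleteEdges_le _) le_rfl (i, a) (j, b) hij]
    omega

end key


/-- Let `n ≥ 3` and let `S` be any set of `r` vertical edges of
`G_n = P₂ ⊠ C_n` (the vertical edges being the edges joining `(i,0)` and `(i,1)`), where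
`0 ≤ r ≤ n`. Then the Wiener index of the graph obtained from `G_n` by deleting the edges
of `S` equals `W(G_n) + r`. -/
theorem wienerIndex_Gn_deleteVerticalEdges (n r : ℕ) [NeZero n] (hn : 3 ≤ n)
    (hr : r ≤ n) (S : Finset (Sym2 (ZMod n × Fin 2)))
    (hS : ∀ e ∈ S, ∃ i : ZMod n, e = s(((i, 0) : ZMod n × Fin 2), (i, 1)))
    (hcard : S.card = r) :
    wienerIndex ((Gn n).deleteEdges ↑S) = wienerIndex (Gn n) + r := by
  classical
  have hsum : (∑ u : ZMod n × Fin 2, ∑ v : ZMod n × Fin 2, ((Gn n).deleteEdges ↑S).dist u v)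
      = (∑ u : ZMod n × Fin 2, ∑ v : ZMod n × Fin 2, (Gn n).dist u v) + r * 2 := by
    have hrow : ∀ u : ZMod n × Fin 2, (∑ v : ZMod n × Fin 2, ((Gn n).deleteEdges ↑S).dist u v)
        = (∑ v : ZMod n × Fin 2, (Gn n).dist u v) +
          (if s(((u.1, 0) : ZMod n × Fin 2), (u.1, 1)) ∈ S then 1 else 0) := by
      intro u
      rw [Finset.sum_congr rfl (fun v _ => key_dist S hS hn u v), Finset.sum_add_distrib]
      congr 1
      by_cases h : s(((u.1, 0) : ZMod n × Fin 2), (u.1, 1)) ∈ S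
      · simp [h]
      · simp [h]
    rw [Finset.sum_congr rfl (fun u _ => hrow u), Finset.sum_add_distrib]
    congr 1
    have himg : (Finset.univ.filter
        (fun i : ZMod n => s(((i, 0) : ZMod n × Fin 2), (i, 1)) ∈ S)).card = r := by
      rw [← hcard]
      apply Finset.card_bij (fun i _ => s(((i, 0) : ZMod n × Fin 2), (i, 1)))
      · intro i hi; exact (Finset.mem_filter.mp hi).2
      · intro i hi j hj hij
        rw [Sym2.eq_iff] at hij
        rcases hij with ⟨h1, -⟩ | ⟨h1, -⟩ <;> exact congrArg Prod.fst h1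
      · intro e he
        obtain ⟨i, rfl⟩ := hS e he
        exact ⟨i, Finset.mem_filter.mpr ⟨Finset.mem_univ _, he⟩, rfl⟩
    calc ∑ u : ZMod n × Fin 2, (if s(((u.1, 0) : ZMod n × Fin 2), (u.1, 1)) ∈ S then 1 else 0)
        = ∑ i : ZMod n, ∑ _a : Fin 2,
            (if s(((i, 0) : ZMod n × Fin 2), (i, 1)) ∈ S then 1 else 0) := by
          rw [Fintype.sum_prod_type]
      _ = ∑ i : ZMod n, 2 * (if s(((i, 0) : ZMod n × Fin 2), (i, 1)) ∈ S then 1 else 0) := by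
          simp [Finset.sum_const]
      _ = 2 * ∑ i : ZMod n, (if s(((i, 0) : ZMod n × Fin 2), (i, 1)) ∈ S then 1 else 0) := by
          rw [← Finset.mul_sum]
      _ = 2 * (Finset.univ.filter
            (fun i : ZMod n => s(((i, 0) : ZMod n × Fin 2), (i, 1)) ∈ S)).card := by
          simp [Finset.sum_boole]
      _ = r * 2 := by rw [himg]; ring
  rw [wienerIndex, wienerIndex, hsum]
  omega
end
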